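/- Let D₁, ..., Dₙ : [0,∞) → (0,1] be twice continuously differentiable, strictly decreasing discount functions, each with non-increasing time preference rate r_i = -D_i'/D_i. Then for any weights λ_i > 0 summing to 1, the mixture D = Σ λ_i D_i has non-increasing time preference rate r = -D'/D; moreover r'(t) = Σ_i (λ_i D_i(t)/D(t)) r_i'(t) - (Σ_{i<j} λ_i λ_j D_i(t) D_j(t)(r_i(t) - r_j(t))²)/D(t)². -/

import Mathlib

open Real Set

lemma key_identity {n : ℕ} (a q : Fin n → ℝ) :
    (∑ i, ∑ j, if i < j then a i * a j * (q i - q j) ^ 2 else 0)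
      = (∑ i, a i) * (∑ i, a i * q i ^ 2) - (∑ i, a i * q i) ^ 2 := by
  have hfull : ∑ i, ∑ j, a i * a j * (q i - q j) ^ 2
      = 2 * ((∑ i, a i) * (∑ i, a i * q i ^ 2) - (∑ i, a i * q i) ^ 2) := by
    have e1 : ∑ i : Fin n, ∑ j, a i * a j * (q i - q j) ^ 2
        = ∑ i, ∑ j, (a i * (a j * q j ^ 2) + (a i * q i ^ 2) * a j
            - 2 * ((a i * q i) * (a j * q j))) := by
      refine Finset.sum_congr rfl fun i _ => Finset.sum_congr rfl fun j _ => by ring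
    rw [e1]
    simp only [Finset.sum_sub_distrib, Finset.sum_add_distrib, ← Finset.mul_sum,
      ← Finset.sum_mul]
    ring
  have hswap : (∑ i : Fin n, ∑ j, if i < j then a i * a j * (q i - q j) ^ 2 else 0)
      = ∑ i, ∑ j, (if j < i then a i * a j * (q i - q j) ^ 2 else 0) := by
    rw [Finset.sum_comm]
    refine Finset.sum_congr rfl fun i _ => Finset.sum_congr rfl fun j _ => ?_
    split_ifs with h
    · ring
    · rfl
  have hsplit : ∑ i : Fin n, ∑ j, a i * a j * (q i - q j) ^ 2
      = (∑ i, ∑ j, (if i < j then a i * a j * (q i - q j) ^ 2 else 0))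
        + ∑ i, ∑ j, (if j < i then a i * a j * (q i - q j) ^ 2 else 0) := by
    rw [← Finset.sum_add_distrib]
    simp only [← Finset.sum_add_distrib]
    refine Finset.sum_congr rfl fun i _ => Finset.sum_congr rfl fun j _ => ?_
    rcases lt_trichotomy i j with h | h | h
    · simp [h, asymm h]
    · subst h; simp
    · simp [h, asymm h, not_lt_of_gt h]
  rw [← hswap] at hsplit
  linarith

theorem mixture_DI_of_DI
    (n : ℕ) (D D' D'' : Fin n → ℝ → ℝ) (lam : Fin n → ℝ)
    (hlam : ∀ i, 0 < lam i) (hsum : ∑ i, lam i = 1)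
    (hD : ∀ i t, HasDerivAt (D i) (D' i t) t)
    (hD' : ∀ i t, HasDerivAt (D' i) (D'' i t) t)
    (hD''cont : ∀ i, Continuous (D'' i))
    (hpos : ∀ i, ∀ t ∈ Ici (0:ℝ), 0 < D i t)
    (hle : ∀ i, ∀ t ∈ Ici (0:ℝ), D i t ≤ 1)
    (hneg : ∀ i, ∀ t ∈ Ici (0:ℝ), D' i t < 0)
    (r : Fin n → ℝ → ℝ) (hr : ∀ i t, r i t = -(D' i t) / D i t)
    (r' : Fin n → ℝ → ℝ) (hrd : ∀ i t, HasDerivAt (r i) (r' i t) t)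
    (hranti : ∀ i, ∀ t ∈ Ici (0:ℝ), r' i t ≤ 0) :
    AntitoneOn (fun t => -(∑ i, lam i * D' i t) / (∑ i, lam i * D i t)) (Ici 0) ∧
    ∀ t ∈ Ici (0:ℝ),
      HasDerivAt (fun s => -(∑ i, lam i * D' i s) / (∑ i, lam i * D i s))
        ((∑ i, (lam i * D i t / (∑ j, lam j * D j t)) * r' i t) -
          (∑ i, ∑ j, if i < j then
              lam i * lam j * D i t * D j t * (r i t - r j t) ^ 2 else 0) /
            (∑ j, lam j * D j t) ^ 2) t := by
  have hn0 : n ≠ 0 := by rintro rfl; simp at hsum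
  haveI : Nonempty (Fin n) := Fin.pos_iff_nonempty.mp (Nat.pos_of_ne_zero hn0)
  have hSpos : ∀ t ∈ Ici (0:ℝ), 0 < ∑ i, lam i * D i t := fun t ht =>
    Finset.sum_pos (fun i _ => mul_pos (hlam i) (hpos i t ht)) Finset.univ_nonempty
  have hSder : ∀ t, HasDerivAt (fun s => ∑ i, lam i * D i s) (∑ i, lam i * D' i t) t :=
    fun t => HasDerivAt.fun_sum (fun i _ => (hD i t).const_mul (lam i))
  have hS'der : ∀ t, HasDerivAt (fun s => ∑ i, lam i * D' i s) (∑ i, lam i * D'' i t) t :=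
    fun t => HasDerivAt.fun_sum (fun i _ => (hD' i t).const_mul (lam i))
  have hD'eq : ∀ i, ∀ t ∈ Ici (0:ℝ), D' i t = -(r i t) * D i t := by
    intro i t ht
    have hne := (hpos i t ht).ne'
    rw [hr i t]
    field_simp
  have hr'eq : ∀ i, ∀ t ∈ Ici (0:ℝ),
      r' i t = (-(D'' i t) * D i t - -(D' i t) * D' i t) / (D i t) ^ 2 := by
    intro i t ht
    have hne := (hpos i t ht).ne'
    have h1 : HasDerivAt (fun s => -(D' i s) / D i s)
        ((-(D'' i t) * D i t - -(D' i t) * D' i t) / (D i t) ^ 2) t :=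
      ((hD' i t).neg).div (hD i t) hne
    have h2 : (fun s => -(D' i s) / D i s) = r i := by
      funext s; rw [hr i s]
    rw [h2] at h1
    exact (hrd i t).unique h1
  have hD''eq : ∀ i, ∀ t ∈ Ici (0:ℝ), D'' i t = (r i t ^ 2 - r' i t) * D i t := by
    intro i t ht
    have hne := (hpos i t ht).ne'
    have hA : r' i t * (D i t) ^ 2 = -(D'' i t) * D i t - -(D' i t) * D' i t := by
      rw [hr'eq i t ht]; field_simp
    have hB : D' i t = -(r i t) * D i t := hD'eq i t ht
    have h4 : D'' i t * D i t = ((r i t ^ 2 - r' i t) * D i t) * D i t := by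
      linear_combination hA + (D' i t - r i t * D i t) * hB
    exact mul_right_cancel₀ hne h4
  have hmain : ∀ t ∈ Ici (0:ℝ),
      HasDerivAt (fun s => -(∑ i, lam i * D' i s) / (∑ i, lam i * D i s))
        ((∑ i, (lam i * D i t / (∑ j, lam j * D j t)) * r' i t) -
          (∑ i, ∑ j, if i < j then
              lam i * lam j * D i t * D j t * (r i t - r j t) ^ 2 else 0) /
            (∑ j, lam j * D j t) ^ 2) t := by
    intro t ht
    have hSne := (hSpos t ht).ne'
    have hd := ((hS'der t).neg).div (hSder t) hSne
    have hval : (∑ i, (lam i * D i t / (∑ j, lam j * D j t)) * r' i t) -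
          (∑ i, ∑ j, if i < j then
              lam i * lam j * D i t * D j t * (r i t - r j t) ^ 2 else 0) /
            (∑ j, lam j * D j t) ^ 2
        = (-(∑ i, lam i * D'' i t) * (∑ i, lam i * D i t)
            - -(∑ i, lam i * D' i t) * (∑ i, lam i * D' i t)) / (∑ i, lam i * D i t) ^ 2 := by
      have hS' : ∑ i, lam i * D' i t = -(∑ i, (lam i * D i t) * r i t) := by
        rw [← Finset.sum_neg_distrib]
        refine Finset.sum_congr rfl fun i _ => ?_
        rw [hD'eq i t ht]; ring
      have hS'' : ∑ i, lam i * D'' i t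
          = (∑ i, (lam i * D i t) * r i t ^ 2) - ∑ i, (lam i * D i t) * r' i t := by
        rw [← Finset.sum_sub_distrib]
        refine Finset.sum_congr rfl fun i _ => ?_
        rw [hD''eq i t ht]; ring
      have hT : (∑ i, ∑ j, if i < j then
              lam i * lam j * D i t * D j t * (r i t - r j t) ^ 2 else 0)
          = (∑ i, lam i * D i t) * (∑ i, (lam i * D i t) * r i t ^ 2)
            - (∑ i, (lam i * D i t) * r i t) ^ 2 := by
        rw [← key_identity (fun i => lam i * D i t) (fun i => r i t)]
        refine Finset.sum_congr rfl fun i _ => Finset.sum_congr rfl fun j _ => ?_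
        split_ifs with h
        · ring
        · rfl
      have hfrac : ∑ i, (lam i * D i t / (∑ j, lam j * D j t)) * r' i t
          = (∑ i, (lam i * D i t) * r' i t) / (∑ j, lam j * D j t) := by
        rw [Finset.sum_div]
        refine Finset.sum_congr rfl fun i _ => by ring
      rw [hfrac, hT, hS', hS'']
      field_simp
      ring
    rw [hval]
    exact hd
  refine ⟨?_, hmain⟩
  apply antitoneOn_of_deriv_nonpos (convex_Ici 0)
  · exact fun t ht => (hmain t ht).continuousAt.continuousWithinAt
  · intro t ht
    rw [interior_Ici] at ht
    exact (hmain t (mem_Ici.mpr (le_of_lt (mem_Ioi.mp ht)))).differentiableAt.differentiableWithinAt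
  · intro t ht
    rw [interior_Ici] at ht
    have ht' : t ∈ Ici (0:ℝ) := mem_Ici.mpr (le_of_lt (mem_Ioi.mp ht))
    rw [(hmain t ht').deriv]
    have h1 : ∑ i, (lam i * D i t / (∑ j, lam j * D j t)) * r' i t ≤ 0 := by
      refine Finset.sum_nonpos fun i _ => ?_
      have ha : 0 ≤ lam i * D i t / (∑ j, lam j * D j t) :=
        div_nonneg (mul_nonneg (hlam i).le (hpos i t ht').le) (hSpos t ht').le
      exact mul_nonpos_of_nonneg_of_nonpos ha (hranti i t ht')
    have h2 : 0 ≤ (∑ i, ∑ j, if i < j then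
              lam i * lam j * D i t * D j t * (r i t - r j t) ^ 2 else 0) /
            (∑ j, lam j * D j t) ^ 2 := by
      refine div_nonneg ?_ (sq_nonneg _)
      refine Finset.sum_nonneg fun i _ => Finset.sum_nonneg fun j _ => ?_
      split_ifs with h
      · exact mul_nonneg (mul_nonneg (mul_nonneg (mul_nonneg (hlam i).le (hlam j).le)
          (hpos i t ht').le) (hpos j t ht').le) (sq_nonneg _)
      · exact le_rfl
    linarith
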